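/- For every real number δ with 0 < δ < 1/(2 sin(π/7)) − 1, the function g(z) := −1/(2δ) + 1/(4δ sin((1−z)π/6)) − z satisfies g(0) = 0, g'(0) ≥ 0, and g''(z) ≥ 0 for z in [0, 1 − (6/π) arcsin(1/(2(1+δ)))]; consequently g(z) ≥ 0 on this interval. -/

import Mathlib

open Real Set

set_option maxHeartbeats 1600000 in
theorem soft_disc_g_nonneg (δ : ℝ) (hδ0 : 0 < δ)
    (hδ1 : δ < 1 / (2 * Real.sin (π / 7)) - 1)
    (g : ℝ → ℝ)
    (hg : ∀ z : ℝ, g z = -1 / (2 * δ) + 1 / (4 * δ * Real.sin ((1 - z) * π / 6)) - z) :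
    g 0 = 0 ∧ deriv g 0 ≥ 0 ∧
    (∀ z ∈ Icc (0 : ℝ) (1 - (6 / π) * Real.arcsin (1 / (2 * (1 + δ)))),
      deriv (deriv g) z ≥ 0) ∧
    (∀ z ∈ Icc (0 : ℝ) (1 - (6 / π) * Real.arcsin (1 / (2 * (1 + δ)))),
      g z ≥ 0) := by
  have hπ : (0:ℝ) < π := Real.pi_pos
  have hδ' : (0:ℝ) < 1 + δ := by linarith
  set x0 : ℝ := 1 / (2 * (1 + δ)) with hx0def
  have hx0pos : 0 < x0 := by positivity
  have hx0lt : x0 < 1/2 := by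
    rw [hx0def, div_lt_iff₀ (by positivity)]; nlinarith
  set u0 : ℝ := Real.arcsin x0 with hu0def
  have hu0pos : 0 < u0 := Real.arcsin_pos.2 hx0pos
  have hu0lt : u0 < π / 6 := by
    have h := Real.arcsin_lt_iff_lt_sin' (x := x0) (y := π/6)
      ⟨by linarith [Real.pi_div_two_pos], by linarith [Real.pi_pos]⟩
    rw [Real.sin_pi_div_six] at h
    exact h.2 hx0lt
  set b : ℝ := 1 - (6 / π) * u0 with hbdef
  clear_value x0 u0 b
  have hb1 : b < 1 := by
    have : 0 < (6/π) * u0 := by positivity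
    linarith
  have hb0 : 0 < b := by
    have h1 : (6/π) * u0 < (6/π) * (π/6) :=
      mul_lt_mul_of_pos_left hu0lt (by positivity)
    have h6 : (6/π) * (π/6) = 1 := by field_simp
    rw [hbdef]; linarith
  have hsin : ∀ z ∈ Icc (0:ℝ) b, 0 < Real.sin ((1 - z) * π / 6) := by
    intro z hz
    apply Real.sin_pos_of_pos_of_lt_pi
    · have h1 : z < 1 := lt_of_le_of_lt hz.2 hb1
      have h2 : 0 < 1 - z := by linarith
      positivity
    · have h1 : 1 - z ≤ 1 := by linarith [hz.1]
      have h2 : (1 - z) * π / 6 ≤ π / 6 := by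
        rw [div_le_div_iff₀ (by norm_num) (by norm_num)]
        nlinarith
      linarith
  set g1 : ℝ → ℝ := fun z => π * Real.cos ((1 - z) * π / 6) /
      (24 * δ * (Real.sin ((1 - z) * π / 6))^2) - 1 with hg1def
  set g2 : ℝ → ℝ := fun z => π^2 * (1 + (Real.cos ((1 - z) * π / 6))^2) /
      (144 * δ * (Real.sin ((1 - z) * π / 6))^3) with hg2def
  clear_value g1 g2
  have h0mem : (0:ℝ) ∈ Icc (0:ℝ) b := ⟨le_refl 0, le_of_lt hb0⟩
  have hsne : ∀ z ∈ Icc (0:ℝ) b, Real.sin ((1 - z) * π / 6) ≠ 0 :=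
    fun z hz => ne_of_gt (hsin z hz)
  have hinner : ∀ z : ℝ, HasDerivAt (fun z : ℝ => (1 - z) * π / 6) (-π/6) z := by
    intro z
    have h := (((hasDerivAt_id z).const_sub 1).mul_const π).div_const 6
    refine h.congr_deriv ?_
    ring
  -- first derivative
  have key1 : ∀ z : ℝ, Real.sin ((1 - z) * π / 6) ≠ 0 → HasDerivAt g (g1 z) z := by
    intro z hne
    have hgfun : g = fun z => -1 / (2 * δ) + 1 / (4 * δ * Real.sin ((1 - z) * π / 6)) - z :=
      funext hg
    rw [hgfun]
    have h2 : HasDerivAt (fun z : ℝ => Real.sin ((1 - z) * π / 6))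
        (Real.cos ((1 - z) * π / 6) * (-π/6)) z :=
      (Real.hasDerivAt_sin _).comp z (hinner z)
    have h3 : HasDerivAt (fun z : ℝ => 4 * δ * Real.sin ((1 - z) * π / 6))
        (4 * δ * (Real.cos ((1 - z) * π / 6) * (-π/6))) z := h2.const_mul _
    have hden : 4 * δ * Real.sin ((1 - z) * π / 6) ≠ 0 := by
      intro h
      apply hne
      have h4 : (4:ℝ) * δ ≠ 0 := by positivity
      rcases mul_eq_zero.1 h with h | h
      · exact absurd h (by positivity)
      · exact h
    have h4 := (hasDerivAt_const z (1:ℝ)).div h3 hden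
    have h5 := ((hasDerivAt_const z (-1 / (2*δ))).add h4).sub (hasDerivAt_id z)
    refine h5.congr_deriv ?_
    symm
    simp only [hg1def]
    field_simp
    ring
  -- second derivative
  have key2 : ∀ z : ℝ, Real.sin ((1 - z) * π / 6) ≠ 0 → HasDerivAt g1 (g2 z) z := by
    intro z hne
    have h2 : HasDerivAt (fun z : ℝ => Real.sin ((1 - z) * π / 6))
        (Real.cos ((1 - z) * π / 6) * (-π/6)) z :=
      (Real.hasDerivAt_sin _).comp z (hinner z)
    have h2c : HasDerivAt (fun z : ℝ => Real.cos ((1 - z) * π / 6))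
        (-Real.sin ((1 - z) * π / 6) * (-π/6)) z :=
      (Real.hasDerivAt_cos _).comp z (hinner z)
    have hnum : HasDerivAt (fun z : ℝ => π * Real.cos ((1 - z) * π / 6))
        (π * (-Real.sin ((1 - z) * π / 6) * (-π/6))) z := h2c.const_mul _
    have hsq : HasDerivAt (fun z : ℝ => (Real.sin ((1 - z) * π / 6))^2)
        (2 * (Real.sin ((1 - z) * π / 6))^1 * (Real.cos ((1 - z) * π / 6) * (-π/6))) z := by
      simpa using h2.fun_pow 2
    have hden : HasDerivAt (fun z : ℝ => 24 * δ * (Real.sin ((1 - z) * π / 6))^2)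
        (24 * δ * (2 * (Real.sin ((1 - z) * π / 6))^1 *
          (Real.cos ((1 - z) * π / 6) * (-π/6)))) z := hsq.const_mul _
    have hdne : 24 * δ * (Real.sin ((1 - z) * π / 6))^2 ≠ 0 := by
      have h1 : (Real.sin ((1 - z) * π / 6))^2 ≠ 0 := pow_ne_zero 2 hne
      positivity
    have h6 := (hnum.div hden hdne).sub_const 1
    have h7 : HasDerivAt g1
        ((π * (-Real.sin ((1 - z) * π / 6) * (-π/6)) * (24 * δ * (Real.sin ((1 - z) * π / 6))^2)
          - π * Real.cos ((1 - z) * π / 6) * (24 * δ * (2 * (Real.sin ((1 - z) * π / 6))^1 *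
            (Real.cos ((1 - z) * π / 6) * (-π/6))))) /
          (24 * δ * (Real.sin ((1 - z) * π / 6))^2)^2) z := by
      rw [hg1def]; exact h6
    convert h7 using 1
    have hs := Real.sin_sq_add_cos_sq ((1 - z) * π / 6)
    simp only [hg2def]
    rw [div_eq_div_iff (by positivity) (by positivity)]
    linear_combination (-(576:ℝ) * π^2 * δ^2 * (Real.sin ((1 - z) * π / 6))^4) * hs
  -- g(0) = 0
  have part1 : g 0 = 0 := by
    rw [hg]
    norm_num [Real.sin_pi_div_six]
    field_simp
    ring
  -- numeric bound: 12 δ ≤ √3 π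
  have hnum12 : 12 * δ ≤ Real.sqrt 3 * π := by
    have hπ1 : (3.141592:ℝ) < π := Real.pi_gt_d6
    have hπ2 : π < 3.15 := Real.pi_lt_d2
    have hx7 : π/7 ≤ 1 := by nlinarith
    have hs7 : π/7 - (π/7)^3/4 < Real.sin (π/7) := by
      have h := Real.sin_gt_sub_cube (x := π/7) (by positivity)
      have : 0 < (π/7)^3 := by positivity
      linarith
    have hπ3 : π^3 < 31.3 := by
      have h := pow_lt_pow_left₀ hπ2 hπ.le (n := 3) (by norm_num)
      norm_num at h
      linarith
    have hs7b : (0.42:ℝ) < Real.sin (π/7) := by nlinarith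
    have hs7pos : 0 < Real.sin (π/7) := by linarith
    have hd : (δ + 1) * (2 * Real.sin (π/7)) < 1 := by
      have h1 : δ + 1 < 1 / (2 * Real.sin (π/7)) := by linarith
      exact (lt_div_iff₀ (by positivity)).1 h1
    have hδb : δ < 0.2 := by
      nlinarith [mul_pos (show (0:ℝ) < Real.sin (π/7) - 0.42 by linarith) hδ']
    have hsqrt : (1.7:ℝ) ≤ Real.sqrt 3 := by
      rw [show (3:ℝ) = 1.7^2 + 0.11 by norm_num]
      nlinarith [Real.sq_sqrt (show (0:ℝ) ≤ 1.7^2 + 0.11 by norm_num),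
        Real.sqrt_nonneg (1.7^2 + 0.11)]
    have h17 : 1.7 * π ≤ Real.sqrt 3 * π := mul_le_mul_of_nonneg_right hsqrt hπ.le
    linarith
  -- g1 0 ≥ 0
  have hg10 : 0 ≤ g1 0 := by
    have h0 : ((1:ℝ) - 0) * π / 6 = π/6 := by ring
    rw [hg1def]
    simp only [h0, Real.sin_pi_div_six, Real.cos_pi_div_six]
    rw [sub_nonneg, le_div_iff₀ (by positivity)]
    nlinarith [hnum12]
  have part2 : deriv g 0 ≥ 0 := by
    rw [ge_iff_le, (key1 0 (hsne 0 h0mem)).deriv]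
    exact hg10
  -- second derivative nonneg
  have hg2nonneg : ∀ z ∈ Icc (0:ℝ) b, 0 ≤ g2 z := by
    intro z hz
    rw [hg2def]
    exact div_nonneg (by positivity)
      (le_of_lt (mul_pos (by positivity) (pow_pos (hsin z hz) 3)))
  have part3 : ∀ z ∈ Icc (0:ℝ) b, deriv (deriv g) z ≥ 0 := by
    intro z hz
    have hc : Continuous fun w : ℝ => Real.sin ((1 - w) * π / 6) := by continuity
    have hopen : IsOpen {w : ℝ | Real.sin ((1 - w) * π / 6) ≠ 0} :=
      isOpen_compl_singleton.preimage hc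
    have hmem : {w : ℝ | Real.sin ((1 - w) * π / 6) ≠ 0} ∈ nhds z :=
      hopen.mem_nhds (hsne z hz)
    have hev : deriv g =ᶠ[nhds z] g1 := by
      filter_upwards [hmem] with w hw
      exact (key1 w hw).deriv
    rw [ge_iff_le, hev.deriv_eq, (key2 z (hsne z hz)).deriv]
    exact hg2nonneg z hz
  -- monotonicity
  have hg1mono : MonotoneOn g1 (Icc (0:ℝ) b) := by
    apply monotoneOn_of_deriv_nonneg (convex_Icc 0 b)
    · exact fun z hz => ((key2 z (hsne z hz)).continuousAt).continuousWithinAt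
    · exact fun z hz =>
        ((key2 z (hsne z (interior_subset hz))).differentiableAt).differentiableWithinAt
    · intro z hz
      rw [(key2 z (hsne z (interior_subset hz))).deriv]
      exact hg2nonneg z (interior_subset hz)
  have hgmono : MonotoneOn g (Icc (0:ℝ) b) := by
    apply monotoneOn_of_deriv_nonneg (convex_Icc 0 b)
    · exact fun z hz => ((key1 z (hsne z hz)).continuousAt).continuousWithinAt
    · exact fun z hz =>
        ((key1 z (hsne z (interior_subset hz))).differentiableAt).differentiableWithinAt
    · intro z hz
      rw [(key1 z (hsne z (interior_subset hz))).deriv]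
      have h1 : g1 0 ≤ g1 z :=
        hg1mono h0mem (interior_subset hz) (interior_subset hz).1
      linarith
  have part4 : ∀ z ∈ Icc (0:ℝ) b, g z ≥ 0 := by
    intro z hz
    have h1 := hgmono h0mem hz hz.1
    rw [part1] at h1
    exact h1
  exact ⟨part1, part2, part3, part4⟩
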